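/- Let m ≥ 2 and q ≥ 1 be integers. The set of additive characters χ : ℤ[1/m] → ℝ/ℤ satisfying χ(m^q·x) = χ(x) for all x ∈ ℤ[1/m] (i.e., the fixed points of the q-th iterate of the automorphism α̂ of the solenoid S_m dual to the map b ↦ m·b) is finite, of cardinality exactly m^q − 1. -/

import Mathlib

noncomputable section

/-- `B a` is the additive subgroup of `ℝ` generated by the integer powers of `a`;
for an integer `m ≥ 2`, `B m` is `ℤ[1/m]` viewed inside `ℝ`. -/
def B (a : ℝ) : AddSubgroup ℝ := AddSubgroup.closure {x : ℝ | ∃ n : ℤ, x = a ^ n}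

namespace CP


variable {m : ℕ}

lemma mem_B_iff (hm : 2 ≤ m) {x : ℝ} :
    x ∈ B m ↔ ∃ j : ℤ, ∃ l : ℕ, x = j / (m : ℝ) ^ l := by
  have hm0 : (m : ℝ) ≠ 0 := by positivity
  constructor
  · intro hx
    induction hx using AddSubgroup.closure_induction with
    | mem x hx =>
      obtain ⟨n, rfl⟩ := hx
      rcases le_or_gt 0 n with hn | hn
      · refine ⟨(m : ℤ) ^ n.toNat, 0, ?_⟩
        push_cast
        rw [pow_zero, div_one, ← zpow_natCast, Int.toNat_of_nonneg hn]
      · refine ⟨1, (-n).toNat, ?_⟩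
        push_cast
        rw [← zpow_natCast, Int.toNat_of_nonneg (by omega : (0:ℤ) ≤ -n), one_div,
          ← zpow_neg, neg_neg]
    | zero => exact ⟨0, 0, by simp⟩
    | add x y hx hy ihx ihy =>
      obtain ⟨j, l, rfl⟩ := ihx
      obtain ⟨j', l', rfl⟩ := ihy
      refine ⟨j * (m:ℤ) ^ l' + j' * (m:ℤ) ^ l, l + l', ?_⟩
      have h1 : (m:ℝ)^l ≠ 0 := by positivity
      have h2 : (m:ℝ)^l' ≠ 0 := by positivity
      push_cast
      rw [div_add_div _ _ h1 h2, pow_add]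
      ring_nf
    | neg x hx ih =>
      obtain ⟨j, l, rfl⟩ := ih
      exact ⟨-j, l, by push_cast; ring⟩
  · rintro ⟨j, l, rfl⟩
    have hgen : (m : ℝ) ^ (-(l:ℤ)) ∈ B m := AddSubgroup.subset_closure ⟨-(l:ℤ), rfl⟩
    have := AddSubgroup.zsmul_mem _ hgen j
    convert this using 1
    rw [zpow_neg, zpow_natCast, zsmul_eq_mul, div_eq_mul_inv]



/-- The embedding `ZMod n → ℝ/ℤ`, `k ↦ k/n`. -/
def f (n : ℕ) : ℤ →+ AddCircle (1:ℝ) :=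
  zmultiplesHom (AddCircle (1:ℝ)) (((n:ℝ)⁻¹ : ℝ) : AddCircle (1:ℝ))

lemma f_apply (n : ℕ) (j : ℤ) : f n j = ((j * (n:ℝ)⁻¹ : ℝ) : AddCircle (1:ℝ)) := by
  show j • (((n:ℝ)⁻¹ : ℝ) : AddCircle (1:ℝ)) = _
  rw [← QuotientAddGroup.mk_zsmul, zsmul_eq_mul]

lemma f_n (n : ℕ) : f n ((n : ℕ) : ℤ) = 0 := by
  rcases eq_or_ne n 0 with rfl | hn
  · simp [f]
  · rw [f_apply]
    have : ((n:ℝ) * (n:ℝ)⁻¹ : ℝ) = 1 := by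
      field_simp
    push_cast
    rw [this]
    rw [AddCircle.coe_eq_zero_iff]
    exact ⟨1, by simp⟩

def e (n : ℕ) : ZMod n →+ AddCircle (1:ℝ) := ZMod.lift n ⟨f n, f_n n⟩

lemma e_intCast (n : ℕ) (j : ℤ) :
    e n ((j : ℤ) : ZMod n) = ((j * (n:ℝ)⁻¹ : ℝ) : AddCircle (1:ℝ)) := by
  rw [e, ZMod.lift_coe, f_apply]

lemma e_inj {n : ℕ} (hn : n ≠ 0) : Function.Injective (e n) := by
  rw [injective_iff_map_eq_zero]
  intro k hk
  obtain ⟨j, rfl⟩ := ZMod.intCast_surjective k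
  rw [e_intCast, AddCircle.coe_eq_zero_iff] at hk
  obtain ⟨z, hz⟩ := hk
  rw [ZMod.intCast_zmod_eq_zero_iff_dvd]
  refine ⟨z, ?_⟩
  have hn' : (n:ℝ) ≠ 0 := Nat.cast_ne_zero.mpr hn
  have : (j : ℝ) = n * z := by
    rw [zsmul_eq_mul] at hz
    field_simp at hz
    linarith
  exact_mod_cast this

lemma e_surj_torsion {n : ℕ} (hn : n ≠ 0) (c : AddCircle (1:ℝ)) (hc : n • c = 0) :
    ∃ k : ZMod n, e n k = c := by
  obtain ⟨r, rfl⟩ := QuotientAddGroup.mk'_surjective (AddSubgroup.zmultiples (1:ℝ)) c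
  have hnc : ((n • r : ℝ) : AddCircle (1:ℝ)) = 0 := by
    rw [QuotientAddGroup.mk_nsmul]
    exact hc
  rw [AddCircle.coe_eq_zero_iff] at hnc
  obtain ⟨z, hz⟩ := hnc
  refine ⟨((z : ℤ) : ZMod n), ?_⟩
  rw [e_intCast]
  have hn' : (n:ℝ) ≠ 0 := Nat.cast_ne_zero.mpr hn
  have hr : (z : ℝ) * (n:ℝ)⁻¹ = r := by
    rw [zsmul_eq_mul, mul_one] at hz
    rw [nsmul_eq_mul] at hz
    field_simp
    linarith
  rw [hr]
  rfl





def NN (m q : ℕ) : ℕ := m ^ q - 1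

def minv (m q : ℕ) : ZMod (NN m q) := (m : ZMod (NN m q)) ^ (q - 1)

lemma NN_add_one (hm : 2 ≤ m) (hq : 1 ≤ q) : NN m q + 1 = m ^ q :=
  Nat.sub_add_cancel (Nat.one_le_pow _ _ (by omega))

lemma NN_ne_zero (hm : 2 ≤ m) (hq : 1 ≤ q) : NN m q ≠ 0 := by
  have h : 2 ≤ m ^ q := le_trans hm (Nat.le_self_pow (by omega) m)
  unfold NN; omega

lemma m_pow_q (hm : 2 ≤ m) (hq : 1 ≤ q) : (m : ZMod (NN m q)) ^ q = 1 := by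
  have h := NN_add_one hm hq
  have h2 : ((m ^ q : ℕ) : ZMod (NN m q)) = ((NN m q + 1 : ℕ) : ZMod (NN m q)) := by rw [h]
  push_cast at h2
  rw [ZMod.natCast_self, zero_add] at h2
  exact h2

lemma m_mul_minv (hm : 2 ≤ m) (hq : 1 ≤ q) : (m : ZMod (NN m q)) * minv m q = 1 := by
  rw [minv, ← pow_succ', Nat.sub_add_cancel hq]
  exact m_pow_q hm hq

lemma m_minv_pow (hm : 2 ≤ m) (hq : 1 ≤ q) (t : ℕ) :
    (m : ZMod (NN m q)) ^ t * minv m q ^ t = 1 := by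
  rw [← mul_pow, m_mul_minv hm hq, one_pow]


variable {m q : ℕ}



lemma repW (hm : 2 ≤ m) (hq : 1 ≤ q) {j j' : ℤ} {l l' : ℕ}
    (h : (j:ℝ) / (m:ℝ) ^ l = (j':ℝ) / (m:ℝ) ^ l') :
    (j : ZMod (NN m q)) * minv m q ^ l = (j' : ZMod (NN m q)) * minv m q ^ l' := by
  have hm0 : (m:ℝ) ≠ 0 := by positivity
  rw [div_eq_div_iff (by positivity) (by positivity)] at h
  have hz : j * (m:ℤ) ^ l' = j' * (m:ℤ) ^ l := by exact_mod_cast h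
  have hzz : (j : ZMod (NN m q)) * (m : ZMod (NN m q)) ^ l'
      = (j' : ZMod (NN m q)) * (m : ZMod (NN m q)) ^ l := by
    have h3 := congrArg (fun t : ℤ => (t : ZMod (NN m q))) hz
    push_cast at h3
    exact h3
  linear_combination (minv m q ^ l * minv m q ^ l') * hzz
    - ((j : ZMod (NN m q)) * minv m q ^ l) * m_minv_pow hm hq l'
    + ((j' : ZMod (NN m q)) * minv m q ^ l') * m_minv_pow hm hq l

def u (m q : ℕ) (hm : 2 ≤ m) (x : ↥(B m)) : ZMod (NN m q) :=
  ((mem_B_iff hm).mp x.2).choose * minv m q ^ ((mem_B_iff hm).mp x.2).choose_spec.choose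

lemma u_spec (hm : 2 ≤ m) (hq : 1 ≤ q) (x : ↥(B m)) {j : ℤ} {l : ℕ}
    (hx : (x:ℝ) = j / (m:ℝ) ^ l) : u m q hm x = j * minv m q ^ l := by
  have h := ((mem_B_iff hm).mp x.2).choose_spec.choose_spec
  exact repW hm hq (h.symm.trans hx)

lemma u_add (hm : 2 ≤ m) (hq : 1 ≤ q) (x y : ↥(B m)) :
    u m q hm (x + y) = u m q hm x + u m q hm y := by
  obtain ⟨j, l, hx⟩ := (mem_B_iff hm).mp x.2
  obtain ⟨j', l', hy⟩ := (mem_B_iff hm).mp y.2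
  have hm0 : (m:ℝ) ≠ 0 := by positivity
  have hxy : ((x + y : ↥(B m)) : ℝ)
      = ((j * (m:ℤ)^l' + j' * (m:ℤ)^l : ℤ) : ℝ) / (m:ℝ)^(l+l') := by
    have h0 : ((x + y : ↥(B m)) : ℝ) = (x:ℝ) + (y:ℝ) := rfl
    rw [h0, hx, hy]
    push_cast
    rw [div_add_div _ _ (by positivity : (m:ℝ)^l ≠ 0) (by positivity : (m:ℝ)^l' ≠ 0), pow_add]
    ring_nf
  rw [u_spec hm hq _ hxy, u_spec hm hq _ hx, u_spec hm hq _ hy]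
  push_cast
  linear_combination ((j : ZMod (NN m q)) * minv m q ^ l) * m_minv_pow hm hq l'
    + ((j' : ZMod (NN m q)) * minv m q ^ l') * m_minv_pow hm hq l

def uhom (m q : ℕ) (hm : 2 ≤ m) (hq : 1 ≤ q) : ↥(B m) →+ ZMod (NN m q) :=
  AddMonoidHom.mk' (u m q hm) (u_add hm hq)

def oneB (hm : 2 ≤ m) : ↥(B m) :=
  ⟨1, (mem_B_iff hm).mpr ⟨1, 0, by simp⟩⟩

lemma u_one (hm : 2 ≤ m) (hq : 1 ≤ q) : u m q hm (oneB hm) = 1 := by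
  have h := u_spec hm hq (oneB hm) (j := 1) (l := 0) (by simp [oneB])
  simpa using h


def chi (m q : ℕ) (hm : 2 ≤ m) (hq : 1 ≤ q) (k : ZMod (NN m q)) :
    ↥(B m) →+ AddCircle (1:ℝ) :=
  (e (NN m q)).comp ((AddMonoidHom.mulRight k).comp (uhom m q hm hq))

lemma chi_apply (hm : 2 ≤ m) (hq : 1 ≤ q) (k : ZMod (NN m q)) (x : ↥(B m)) :
    chi m q hm hq k x = e (NN m q) (u m q hm x * k) := rfl

lemma u_nsmul_pow (hm : 2 ≤ m) (hq : 1 ≤ q) (s : ℕ) (x : ↥(B m)) :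
    u m q hm (s • x) = ((s : ℕ) : ZMod (NN m q)) * u m q hm x := by
  have h := map_nsmul (uhom m q hm hq) s x
  have h2 : uhom m q hm hq (s • x) = s • uhom m q hm hq x := h
  rw [nsmul_eq_mul] at h2
  exact h2

lemma chi_mem (hm : 2 ≤ m) (hq : 1 ≤ q) (k : ZMod (NN m q)) (x : ↥(B m)) :
    chi m q hm hq k ((m ^ q) • x) = chi m q hm hq k x := by
  rw [chi_apply, chi_apply, u_nsmul_pow hm hq]
  push_cast
  rw [m_pow_q hm hq, one_mul]

lemma chi_inj (hm : 2 ≤ m) (hq : 1 ≤ q) :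
    Function.Injective (chi m q hm hq) := by
  intro k k' h
  have h1 := congrArg (fun χ : ↥(B m) →+ AddCircle (1:ℝ) => χ (oneB hm)) h
  simp only [chi_apply, u_one hm hq, one_mul] at h1
  exact e_inj (NN_ne_zero hm hq) h1

lemma chi_surj (hm : 2 ≤ m) (hq : 1 ≤ q) (χ : ↥(B m) →+ AddCircle (1:ℝ))
    (hχ : ∀ x : ↥(B m), χ ((m ^ q) • x) = χ x) : ∃ k, chi m q hm hq k = χ := by
  have hm0 : (m:ℝ) ≠ 0 := by positivity
  -- the value at 1 is torsion
  have hsm : ((m ^ q : ℕ)) • (oneB hm) = NN m q • oneB hm + oneB hm := by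
    rw [← NN_add_one hm hq, succ_nsmul]
  have hc : NN m q • χ (oneB hm) = 0 := by
    have h2 := hχ (oneB hm)
    rw [hsm, map_add, map_nsmul] at h2
    simpa using h2
  obtain ⟨k, hk⟩ := e_surj_torsion (NN_ne_zero hm hq) _ hc
  refine ⟨k, ?_⟩
  -- iterating the invariance
  have hiter : ∀ (jn : ℕ) (x : ↥(B m)), χ ((m ^ (q * jn)) • x) = χ x := by
    intro jn
    induction jn with
    | zero => intro x; simp
    | succ jn ih =>
      intro x
      have hstep : (m ^ (q * (jn + 1))) • x = (m ^ (q * jn)) • ((m ^ q) • x) := by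
        rw [smul_smul, ← pow_add, Nat.mul_succ]
      rw [hstep, ih, hχ]
  -- values on negative powers of m
  have hq' : q * 1 = (q - 1) * 1 + 1 := by omega
  have hneg : ∀ (l : ℕ) (x : ↥(B m)), (x:ℝ) = ((m:ℝ) ^ l)⁻¹ →
      χ x = e (NN m q) (minv m q ^ l * k) := by
    intro l x hx
    have hql : q * l = (q - 1) * l + l := by
      rcases Nat.exists_eq_add_of_le hq with ⟨q', rfl⟩
      have : 1 + q' - 1 = q' := by omega
      rw [this, Nat.add_mul, Nat.one_mul, Nat.add_comm]
    have hstep : (m ^ (q * l)) • x = (m ^ ((q - 1) * l)) • oneB hm := by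
      apply Subtype.ext
      have h1 : ((m ^ (q * l) • x : ↥(B ↑m)) : ℝ) = (m ^ (q * l) : ℕ) • (x : ℝ) := rfl
      have h2 : ((m ^ ((q - 1) * l) • oneB hm : ↥(B ↑m)) : ℝ)
          = (m ^ ((q - 1) * l) : ℕ) • ((oneB hm : ℝ)) := rfl
      rw [h1, h2, hx]
      have h3 : ((oneB hm : ↥(B ↑m)) : ℝ) = 1 := rfl
      rw [h3, nsmul_eq_mul, nsmul_eq_mul, mul_one, hql, pow_add]
      push_cast
      field_simp
    have h4 := hiter l x
    rw [hstep] at h4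
    rw [← h4, map_nsmul, ← hk, ← map_nsmul, nsmul_eq_mul]
    congr 1
    rw [minv, ← pow_mul]
    push_cast
    ring
  -- conclude by agreeing on every element
  ext x
  obtain ⟨j, l, hx⟩ := (mem_B_iff hm).mp x.2
  have hxlmem : ((m:ℝ) ^ l)⁻¹ ∈ B m := (mem_B_iff hm).mpr ⟨1, l, by rw [Int.cast_one, one_div]⟩
  set xl : ↥(B (m:ℝ)) := ⟨((m:ℝ) ^ l)⁻¹, hxlmem⟩ with hxl
  have hxeq : x = j • xl := by
    apply Subtype.ext
    have h1 : ((j • xl : ↥(B ↑m)) : ℝ) = j • (xl : ℝ) := rfl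
    rw [h1, hx, hxl, zsmul_eq_mul, div_eq_mul_inv]
  have hu : u m q hm xl = minv m q ^ l := by
    have h := u_spec hm hq xl (j := 1) (l := l) (by rw [hxl, Int.cast_one, one_div])
    simpa using h
  rw [hxeq, map_zsmul, map_zsmul, hneg l xl rfl, chi_apply, hu]

end CP

open CP in
theorem card_periodic_characters (m q : ℕ) (hm : 2 ≤ m) (hq : 1 ≤ q) :
    {χ : ↥(B (m : ℝ)) →+ AddCircle (1 : ℝ) |
        ∀ x : ↥(B (m : ℝ)), χ ((m ^ q) • x) = χ x}.Finite ∧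
    {χ : ↥(B (m : ℝ)) →+ AddCircle (1 : ℝ) |
        ∀ x : ↥(B (m : ℝ)), χ ((m ^ q) • x) = χ x}.ncard = m ^ q - 1 := by
  set S : Set (↥(B (m : ℝ)) →+ AddCircle (1 : ℝ)) :=
    {χ | ∀ x : ↥(B (m : ℝ)), χ ((m ^ q) • x) = χ x} with hS
  have hGbij : Function.Bijective
      (fun k : ZMod (NN m q) => (⟨chi m q hm hq k, fun x => chi_mem hm hq k x⟩ : ↥S)) := by
    constructor
    · intro k k' h
      exact chi_inj hm hq (congrArg Subtype.val h)
    · rintro ⟨χ, hχ⟩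
      obtain ⟨k, hk⟩ := chi_surj hm hq χ hχ
      exact ⟨k, Subtype.ext hk⟩
  haveI : NeZero (NN m q) := ⟨NN_ne_zero hm hq⟩
  haveI : Finite ↥S := Finite.of_equiv _ (Equiv.ofBijective _ hGbij)
  refine ⟨Set.toFinite S, ?_⟩
  rw [← Nat.card_coe_set_eq]
  have h1 : Nat.card (ZMod (NN m q)) = Nat.card ↥S := Nat.card_eq_of_bijective _ hGbij
  rw [← h1, Nat.card_zmod]
  rfl
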